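/- Let H = I7 ∨ C5 and let H^{2n} be its 2n-blow-up (a K4-free graph on 24n vertices). Then D^b_{2,∞}(H^{2n}) = 37n² = (37/576)·|H^{2n}|², which is strictly greater than |H^{2n}|²/16. -/

import Mathlib

open scoped Classical

/-- The number of edges of `G` with both endpoints in `A`. -/
noncomputable def edgesIn {V : Type*} [Fintype V] (G : SimpleGraph V) (A : Finset V) : ℕ :=
  (G.edgeFinset.filter fun e => ∀ v ∈ e, v ∈ A).card

/-- The join `I₇ ∨ C₅` of a 7-vertex independent set and a 5-cycle. -/
def HI7C5 : SimpleGraph (Fin 7 ⊕ Fin 5) :=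
  SimpleGraph.fromRel (fun x y =>
    (x.isLeft = true ∧ y.isRight = true) ∨
    (∃ i j : Fin 5, x = Sum.inr i ∧ y = Sum.inr j ∧ (j : ZMod 5) = (i : ZMod 5) + 1))

/-- The `m`-blow-up of a graph `G`: each vertex is replaced by `m` copies, with copies of
`u` and `v` adjacent iff `u` and `v` are adjacent in `G`. -/
def blowup {V : Type*} (G : SimpleGraph V) (m : ℕ) : SimpleGraph (V × Fin m) where
  Adj x y := G.Adj x.1 y.1
  symm := ⟨by intro x y h; exact h.symm⟩
  loopless := ⟨by intro x h; exact G.loopless.irrefl _ h⟩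

/-! ### Auxiliary arithmetic lemmas -/

lemma tri (n a b c : ℤ) (ha1 : -n ≤ a) (ha2 : a ≤ n) (hb1 : -n ≤ b) (hb2 : b ≤ n)
    (hc1 : -n ≤ c) (hc2 : c ≤ n) : 0 ≤ n^2 + a*b + b*c + c*a := by
  rcases le_total 0 a with h | h
  · rcases le_total 0 b with h' | h'
    · nlinarith [mul_nonneg (by linarith : (0:ℤ) ≤ n - a) (by linarith : (0:ℤ) ≤ n - b),
        mul_nonneg (by linarith : (0:ℤ) ≤ n + c) (by linarith : (0:ℤ) ≤ a + b)]
    · rcases le_total 0 c with h'' | h''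
      · nlinarith [mul_nonneg (by linarith : (0:ℤ) ≤ n - a) (by linarith : (0:ℤ) ≤ n - c),
          mul_nonneg (by linarith : (0:ℤ) ≤ n + b) (by linarith : (0:ℤ) ≤ a + c)]
      · nlinarith [mul_nonneg (by linarith : (0:ℤ) ≤ n + b) (by linarith : (0:ℤ) ≤ n + c),
          mul_nonneg (by linarith : (0:ℤ) ≤ n - a) (by linarith : (0:ℤ) ≤ -b - c)]
  · rcases le_total 0 b with h' | h'
    · rcases le_total 0 c with h'' | h''
      · nlinarith [mul_nonneg (by linarith : (0:ℤ) ≤ n - b) (by linarith : (0:ℤ) ≤ n - c),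
          mul_nonneg (by linarith : (0:ℤ) ≤ n + a) (by linarith : (0:ℤ) ≤ b + c)]
      · nlinarith [mul_nonneg (by linarith : (0:ℤ) ≤ n + a) (by linarith : (0:ℤ) ≤ n + c),
          mul_nonneg (by linarith : (0:ℤ) ≤ n - b) (by linarith : (0:ℤ) ≤ -a - c)]
    · nlinarith [mul_nonneg (by linarith : (0:ℤ) ≤ n + a) (by linarith : (0:ℤ) ≤ n + b),
        mul_nonneg (by linarith : (0:ℤ) ≤ n - c) (by linarith : (0:ℤ) ≤ -a - b)]

lemma cyc5 (n m1 m2 m3 m4 m5 : ℤ) (h1 : -n ≤ m1) (h1' : m1 ≤ n) (h2 : -n ≤ m2) (h2' : m2 ≤ n)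
    (h3 : -n ≤ m3) (h3' : m3 ≤ n) (h4 : -n ≤ m4) (h4' : m4 ≤ n) (h5 : -n ≤ m5) (h5' : m5 ≤ n) :
    0 ≤ 3*n^2 + (m1*m2 + m2*m3 + m3*m4 + m4*m5 + m5*m1) := by
  have t1 := tri n m1 m2 m3 h1 h1' h2 h2' h3 h3'
  have t2 := tri n m3 m4 m5 h3 h3' h4 h4' h5 h5'
  have t3 := tri n m5 m1 (-m3) h5 h5' h1 h1' (by linarith) (by linarith)
  nlinarith [t1, t2, t3]

lemma keyQ (n c1 c2 c3 c4 c5 : ℤ) (h1 : 0 ≤ c1) (h1' : c1 ≤ 2*n) (h2 : 0 ≤ c2) (h2' : c2 ≤ 2*n)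
    (h3 : 0 ≤ c3) (h3' : c3 ≤ 2*n) (h4 : 0 ≤ c4) (h4' : c4 ≤ 2*n) (h5 : 0 ≤ c5) (h5' : c5 ≤ 2*n) :
    2*n*(c1+c2+c3+c4+c5) ≤ 8*n^2 + (c1*c2 + c2*c3 + c3*c4 + c4*c5 + c5*c1) := by
  have := cyc5 n (c1-n) (c2-n) (c3-n) (c4-n) (c5-n) (by linarith) (by linarith) (by linarith)
    (by linarith) (by linarith) (by linarith) (by linarith) (by linarith) (by linarith) (by linarith)
  nlinarith [this]

lemma half (n s s' c1 c2 c3 c4 c5 d1 d2 d3 d4 d5 : ℤ)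
    (hn : 0 ≤ n)
    (hs : 0 ≤ s) (hs' : 0 ≤ s') (hss : s + s' = 14*n)
    (h1 : 0 ≤ c1) (h1' : c1 + d1 = 2*n) (hd1 : 0 ≤ d1)
    (h2 : 0 ≤ c2) (h2' : c2 + d2 = 2*n) (hd2 : 0 ≤ d2)
    (h3 : 0 ≤ c3) (h3' : c3 + d3 = 2*n) (hd3 : 0 ≤ d3)
    (h4 : 0 ≤ c4) (h4' : c4 + d4 = 2*n) (hd4 : 0 ≤ d4)
    (h5 : 0 ≤ c5) (h5' : c5 + d5 = 2*n) (hd5 : 0 ≤ d5)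
    (hbal : s + (c1+c2+c3+c4+c5) = 12*n)
    (hT : c1+c2+c3+c4+c5 ≤ 5*n) :
    37*n^2 ≤ s'*(d1+d2+d3+d4+d5) + (d1*d2 + d2*d3 + d3*d4 + d4*d5 + d5*d1) := by
  set T : ℤ := c1+c2+c3+c4+c5 with hTdef
  have hQ0 : 0 ≤ c1*c2 + c2*c3 + c3*c4 + c4*c5 + c5*c1 := by positivity
  have hkey := keyQ n c1 c2 c3 c4 c5 h1 (by linarith) h2 (by linarith) h3 (by linarith)
    h4 (by linarith) h5 (by linarith)
  have hT0 : 0 ≤ T := by simp only [hTdef]; linarith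
  have hrw : s'*(d1+d2+d3+d4+d5) + (d1*d2 + d2*d3 + d3*d4 + d4*d5 + d5*d1)
      = 40*n^2 + 4*n*T - T^2 + (c1*c2 + c2*c3 + c3*c4 + c4*c5 + c5*c1) := by
    have e1 : d1 = 2*n - c1 := by linarith
    have e2 : d2 = 2*n - c2 := by linarith
    have e3 : d3 = 2*n - c3 := by linarith
    have e4 : d4 = 2*n - c4 := by linarith
    have e5 : d5 = 2*n - c5 := by linarith
    have es : s' = 2*n + T := by simp only [hTdef]; linarith
    rw [e1, e2, e3, e4, e5, es]; simp only [hTdef]; ring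
  rw [hrw]
  rcases le_total T (4*n) with h | h
  · nlinarith [mul_nonneg hT0 (by linarith : (0:ℤ) ≤ 4*n - T)]
  · nlinarith [mul_nonneg (by linarith : (0:ℤ) ≤ T - n) (by linarith : (0:ℤ) ≤ 5*n - T)]

lemma arithNat (n s s' c1 c2 c3 c4 c5 d1 d2 d3 d4 d5 : ℕ)
    (hss : s + s' = 14*n)
    (hcd1 : c1 + d1 = 2*n) (hcd2 : c2 + d2 = 2*n) (hcd3 : c3 + d3 = 2*n)
    (hcd4 : c4 + d4 = 2*n) (hcd5 : c5 + d5 = 2*n)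
    (hbal : s + (c1+c2+c3+c4+c5) = 12*n) :
    37*n^2 ≤ max (s*(c1+c2+c3+c4+c5) + (c1*c2 + c2*c3 + c3*c4 + c4*c5 + c5*c1))
      (s'*(d1+d2+d3+d4+d5) + (d1*d2 + d2*d3 + d3*d4 + d4*d5 + d5*d1)) := by
  have hss' : (s:ℤ) + s' = 14*n := by exact_mod_cast hss
  have hbal' : (s:ℤ) + (c1+c2+c3+c4+c5) = 12*n := by exact_mod_cast hbal
  have e1 : (c1:ℤ) + d1 = 2*n := by exact_mod_cast hcd1
  have e2 : (c2:ℤ) + d2 = 2*n := by exact_mod_cast hcd2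
  have e3 : (c3:ℤ) + d3 = 2*n := by exact_mod_cast hcd3
  have e4 : (c4:ℤ) + d4 = 2*n := by exact_mod_cast hcd4
  have e5 : (c5:ℤ) + d5 = 2*n := by exact_mod_cast hcd5
  have hn : (0:ℤ) ≤ n := Int.natCast_nonneg n
  rcases le_total (c1+c2+c3+c4+c5) (5*n) with h | h
  · refine le_max_of_le_right ?_
    have hT : (c1:ℤ)+c2+c3+c4+c5 ≤ 5*n := by exact_mod_cast h
    have := half (n:ℤ) s s' c1 c2 c3 c4 c5 d1 d2 d3 d4 d5 hn
      (Int.natCast_nonneg s) (Int.natCast_nonneg s') hss'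
      (Int.natCast_nonneg c1) e1 (Int.natCast_nonneg d1)
      (Int.natCast_nonneg c2) e2 (Int.natCast_nonneg d2)
      (Int.natCast_nonneg c3) e3 (Int.natCast_nonneg d3)
      (Int.natCast_nonneg c4) e4 (Int.natCast_nonneg d4)
      (Int.natCast_nonneg c5) e5 (Int.natCast_nonneg d5)
      hbal' hT
    exact_mod_cast this
  · refine le_max_of_le_left ?_
    have hT : (d1:ℤ)+d2+d3+d4+d5 ≤ 5*n := by
      have : (5:ℤ)*n ≤ (c1:ℤ)+c2+c3+c4+c5 := by exact_mod_cast h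
      linarith
    have hbal2 : (s':ℤ) + (d1+d2+d3+d4+d5) = 12*n := by linarith
    have := half (n:ℤ) s' s d1 d2 d3 d4 d5 c1 c2 c3 c4 c5 hn
      (Int.natCast_nonneg s') (Int.natCast_nonneg s) (by linarith)
      (Int.natCast_nonneg d1) (by linarith) (Int.natCast_nonneg c1)
      (Int.natCast_nonneg d2) (by linarith) (Int.natCast_nonneg c2)
      (Int.natCast_nonneg d3) (by linarith) (Int.natCast_nonneg c3)
      (Int.natCast_nonneg d4) (by linarith) (Int.natCast_nonneg c4)
      (Int.natCast_nonneg d5) (by linarith) (Int.natCast_nonneg c5)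
      hbal2 hT
    exact_mod_cast this

/-! ### Counting edges in blow-ups -/

instance : DecidableRel HI7C5.Adj := fun x y =>
  decidable_of_iff _ (SimpleGraph.fromRel_adj _ x y).symm

lemma sum_ite_mem' {V : Type*} [Fintype V] (A : Finset V) (f : V → ℕ) :
    ∑ x : V, (if x ∈ A then f x else 0) = ∑ x ∈ A, f x := by
  rw [← Finset.sum_filter]; congr 1; ext x; simp

lemma double_ite_sum {V : Type*} [Fintype V] (A : Finset V) (f : V → V → ℕ) :
    ∑ x : V, ∑ y : V, (if x ∈ A then (if y ∈ A then f x y else 0) else 0)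
      = ∑ x ∈ A, ∑ y ∈ A, f x y := by
  rw [← sum_ite_mem' A (fun x => ∑ y ∈ A, f x y)]
  exact Finset.sum_congr rfl fun x _ => by
    by_cases hx : x ∈ A
    · simp only [hx, if_true]; exact sum_ite_mem' A (f x)
    · simp [hx]

lemma two_mul_edgesIn {V : Type*} [Fintype V] (G : SimpleGraph V) (A : Finset V) :
    2 * edgesIn G A = ∑ x ∈ A, ∑ y ∈ A, (if G.Adj x y then 1 else 0) := by
  classical
  let GA : SimpleGraph V :=
    { Adj := fun x y => G.Adj x y ∧ x ∈ A ∧ y ∈ A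
      symm := ⟨fun x y ⟨h, hx, hy⟩ => ⟨h.symm, hy, hx⟩⟩
      loopless := ⟨fun x ⟨h, _⟩ => G.loopless.irrefl x h⟩ }
  letI : DecidableRel GA.Adj := fun a b => Classical.propDecidable _
  have h1 : edgesIn G A = GA.edgeFinset.card := by
    refine congrArg Finset.card ?_
    ext e
    induction e using Sym2.ind with
    | _ x y =>
      simp only [Finset.mem_filter, SimpleGraph.mem_edgeFinset, SimpleGraph.mem_edgeSet,
        Sym2.mem_iff, GA]
      constructor
      · rintro ⟨h, hA⟩
        exact ⟨h, hA x (Or.inl rfl), hA y (Or.inr rfl)⟩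
      · rintro ⟨h, hx, hy⟩
        refine ⟨h, ?_⟩
        rintro v (rfl | rfl) <;> assumption
  rw [h1, SimpleGraph.two_mul_card_edgeFinset, Finset.card_filter, Fintype.sum_prod_type]
  have h2 : ∀ x y : V, (if GA.Adj x y then (1:ℕ) else 0)
      = (if x ∈ A then (if y ∈ A then (if G.Adj x y then (1:ℕ) else 0) else 0) else 0) := by
    intro x y
    by_cases hx : x ∈ A <;> by_cases hy : y ∈ A <;> by_cases hadj : G.Adj x y <;>
      simp [GA, hx, hy, hadj]
  simp only [h2]
  exact double_ite_sum A _

lemma sum_fiber {V : Type*} [Fintype V] [DecidableEq V] {m : ℕ} (A : Finset (V × Fin m))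
    (g : V → ℕ) :
    ∑ x ∈ A, g x.1 = ∑ u : V, (A.filter fun p => p.1 = u).card * g u := by
  rw [← Finset.sum_fiberwise_of_maps_to' (fun x _ => Finset.mem_univ x.1) g]
  exact Finset.sum_congr rfl fun u _ => by rw [Finset.sum_const, smul_eq_mul, mul_comm]

set_option maxHeartbeats 1600000 in
lemma blowup_count (m : ℕ) (A : Finset ((Fin 7 ⊕ Fin 5) × Fin m))
    (a : (Fin 7 ⊕ Fin 5) → ℕ) (ha : ∀ u, a u = (A.filter fun p => p.1 = u).card) :
    2 * edgesIn (blowup HI7C5 m) A =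
      2 * ((∑ i : Fin 7, a (.inl i)) * (∑ j : Fin 5, a (.inr j)))
        + 2 * (a (.inr 0) * a (.inr 1) + a (.inr 1) * a (.inr 2) + a (.inr 2) * a (.inr 3)
          + a (.inr 3) * a (.inr 4) + a (.inr 4) * a (.inr 0)) := by
  rw [two_mul_edgesIn]
  have hblow : ∀ x y : (Fin 7 ⊕ Fin 5) × Fin m,
      (blowup HI7C5 m).Adj x y ↔ HI7C5.Adj x.1 y.1 := fun x y => Iff.rfl
  calc ∑ x ∈ A, ∑ y ∈ A, (if (blowup HI7C5 m).Adj x y then (1:ℕ) else 0)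
      = ∑ x ∈ A, (fun u => ∑ y ∈ A, (if HI7C5.Adj u y.1 then (1:ℕ) else 0)) x.1 := by
        refine Finset.sum_congr rfl fun x _ => Finset.sum_congr rfl fun y _ => ?_
        simp only [hblow]
    _ = ∑ u : Fin 7 ⊕ Fin 5, (A.filter fun p => p.1 = u).card
          * ∑ y ∈ A, (if HI7C5.Adj u y.1 then (1:ℕ) else 0) :=
        sum_fiber A (fun u => ∑ y ∈ A, (if HI7C5.Adj u y.1 then (1:ℕ) else 0))
    _ = ∑ u : Fin 7 ⊕ Fin 5, a u * ∑ y ∈ A, (if HI7C5.Adj u y.1 then (1:ℕ) else 0) :=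
        Finset.sum_congr rfl fun u _ => by rw [ha u]
    _ = ∑ u : Fin 7 ⊕ Fin 5, a u * ∑ v : Fin 7 ⊕ Fin 5, a v
          * (if HI7C5.Adj u v then (1:ℕ) else 0) := by
        refine Finset.sum_congr rfl fun u _ => ?_
        congr 1
        calc ∑ y ∈ A, (if HI7C5.Adj u y.1 then (1:ℕ) else 0)
            = ∑ v : Fin 7 ⊕ Fin 5, (A.filter fun p => p.1 = v).card
                * (if HI7C5.Adj u v then (1:ℕ) else 0) :=
              sum_fiber A (fun v => if HI7C5.Adj u v then (1:ℕ) else 0)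
          _ = _ := Finset.sum_congr rfl fun v _ => by rw [ha v]
    _ = _ := by
        have adj_ll : ∀ i j : Fin 7, ¬ HI7C5.Adj (.inl i) (.inl j) := by decide
        have adj_lr : ∀ (i : Fin 7) (j : Fin 5), HI7C5.Adj (.inl i) (.inr j) := by decide
        have adj_rl : ∀ (j : Fin 5) (i : Fin 7), HI7C5.Adj (.inr j) (.inl i) := by decide
        have adj_rr : ∀ i j : Fin 5, HI7C5.Adj (.inr i) (.inr j) ↔ (j = i + 1 ∨ i = j + 1) := by
          decide
        rw [Fintype.sum_sum_type]
        have hIL : ∀ i : Fin 7,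
            (∑ v : Fin 7 ⊕ Fin 5, a v * (if HI7C5.Adj (.inl i) v then (1:ℕ) else 0))
              = ∑ j : Fin 5, a (.inr j) := by
          intro i
          rw [Fintype.sum_sum_type]
          simp [adj_ll, adj_lr]
        have hIR : ∀ i : Fin 5,
            (∑ v : Fin 7 ⊕ Fin 5, a v * (if HI7C5.Adj (.inr i) v then (1:ℕ) else 0))
              = (∑ j : Fin 7, a (.inl j))
                + ∑ j : Fin 5, a (.inr j) * (if (j = i + 1 ∨ i = j + 1) then (1:ℕ) else 0) := by
          intro i
          rw [Fintype.sum_sum_type]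
          simp [adj_rl, adj_rr]
        simp only [hIL, hIR]
        rw [← Finset.sum_mul]
        simp only [Fin.sum_univ_five]
        norm_num
        simp (config := { decide := true }) only [mul_ite, mul_zero, mul_one, if_true, if_false]
        ring

/-! ### Fiber cardinalities -/

lemma card_fiber_univ {V : Type*} [Fintype V] [DecidableEq V] (M : ℕ) (u : V) :
    (Finset.univ.filter fun p : V × Fin M => p.1 = u).card = M := by
  have : (Finset.univ.filter fun p : V × Fin M => p.1 = u)
      = {u} ×ˢ (Finset.univ : Finset (Fin M)) := by
    ext p
    simp only [Finset.mem_filter, Finset.mem_univ, true_and, Finset.mem_product,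
      Finset.mem_singleton, and_true]
  rw [this, Finset.card_product]
  simp

lemma card_fiber_compl {V : Type*} [Fintype V] [DecidableEq V] (M : ℕ)
    (A : Finset (V × Fin M)) (u : V) :
    (A.filter fun p => p.1 = u).card + (Aᶜ.filter fun p => p.1 = u).card = M := by
  have h2 : (A.filter fun p => p.1 = u) ∪ (Aᶜ.filter fun p => p.1 = u)
      = Finset.univ.filter fun p : V × Fin M => p.1 = u := by
    rw [← Finset.filter_union, Finset.union_compl]
  have hd : Disjoint (A.filter fun p => p.1 = u) (Aᶜ.filter fun p => p.1 = u) :=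
    Finset.disjoint_filter_filter (@disjoint_compl_right (Finset (V × Fin M)) _ A)
  have h3 := Finset.card_union_of_disjoint hd
  rw [h2, card_fiber_univ (V := V) M u] at h3
  omega

lemma sum_card_fiber {V : Type*} [Fintype V] [DecidableEq V] (M : ℕ) (A : Finset (V × Fin M)) :
    ∑ u : V, (A.filter fun p => p.1 = u).card = A.card :=
  (Finset.card_eq_sum_card_fiberwise fun x _ => Finset.mem_univ x.1).symm

lemma card_filter_val_lt (M n : ℕ) (h : n ≤ M) :
    (Finset.univ.filter fun k : Fin M => (k : ℕ) < n).card = n := by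
  rw [Finset.card_filter, Fin.sum_univ_eq_sum_range (fun k => if k < n then 1 else 0) M,
    ← Finset.card_filter]
  have : (Finset.range M).filter (fun i => i < n) = Finset.range n := by
    ext i
    simp only [Finset.mem_filter, Finset.mem_range]
    omega
  rw [this, Finset.card_range]
-- assume prior defs; here standalone test of construction helpers


lemma fiber_full {V : Type*} [Fintype V] [DecidableEq V] {M : ℕ} (pred : (V × Fin M) → Prop)
    (u : V) (h : ∀ k, pred (u, k)) :
    ((Finset.univ.filter pred).filter fun p => p.1 = u).card = M := by
  rw [Finset.filter_filter]
  have he : (Finset.univ.filter fun p : V × Fin M => pred p ∧ p.1 = u)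
      = Finset.univ.filter fun p : V × Fin M => p.1 = u := by
    ext ⟨v, k⟩
    simp only [Finset.mem_filter, Finset.mem_univ, true_and]
    constructor
    · exact And.right
    · intro hv
      refine ⟨?_, hv⟩
      have hv' : v = u := hv
      subst hv'
      exact h k
  rw [he, card_fiber_univ]

lemma fiber_empty {V : Type*} [Fintype V] [DecidableEq V] {M : ℕ} (pred : (V × Fin M) → Prop)
    (u : V) (h : ∀ k, ¬ pred (u, k)) :
    ((Finset.univ.filter pred).filter fun p => p.1 = u).card = 0 := by
  rw [Finset.filter_filter, Finset.card_eq_zero]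
  ext ⟨v, k⟩
  simp only [Finset.mem_filter, Finset.mem_univ, true_and, Finset.notMem_empty, iff_false]
  rintro ⟨hp, hv⟩
  have hv' : v = u := hv
  subst hv'
  exact h k hp

lemma fiber_half {V : Type*} [Fintype V] [DecidableEq V] {M : ℕ} (pred : (V × Fin M) → Prop)
    (u : V) (n : ℕ) (hn : n ≤ M) (h : ∀ k, pred (u, k) ↔ (k : ℕ) < n) :
    ((Finset.univ.filter pred).filter fun p => p.1 = u).card = n := by
  rw [Finset.filter_filter]
  have he : (Finset.univ.filter fun p : V × Fin M => pred p ∧ p.1 = u)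
      = {u} ×ˢ (Finset.univ.filter fun k : Fin M => (k : ℕ) < n) := by
    ext ⟨v, k⟩
    simp only [Finset.mem_filter, Finset.mem_univ, true_and, Finset.mem_product,
      Finset.mem_singleton]
    constructor
    · rintro ⟨hp, hv⟩
      have hv' : v = u := hv
      subst hv'
      exact ⟨rfl, (h k).1 hp⟩
    · rintro ⟨rfl, hk⟩
      exact ⟨(h k).2 hk, rfl⟩
  rw [he, Finset.card_product, Finset.card_singleton, one_mul, card_filter_val_lt M n hn]

/-- The predicate describing the extremal balanced bipartition. -/
def consP (n : ℕ) : (Fin 7 ⊕ Fin 5) × Fin (2*n) → Prop := fun p =>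
  Sum.elim (fun i : Fin 7 => (i : ℕ) ≤ 2 ∨ ((i : ℕ) = 3 ∧ (p.2 : ℕ) < n))
    (fun j : Fin 5 => (j : ℕ) = 0 ∨ (j : ℕ) = 2 ∨ ((j : ℕ) = 4 ∧ (p.2 : ℕ) < n)) p.1

theorem stmt_13 (n : ℕ) (hn : 1 ≤ n) :
    (∀ A : Finset ((Fin 7 ⊕ Fin 5) × Fin (2 * n)), A.card = 12 * n →
        max (edgesIn (blowup HI7C5 (2 * n)) A) (edgesIn (blowup HI7C5 (2 * n)) Aᶜ)
          ≥ 37 * n ^ 2) ∧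
      (∃ A : Finset ((Fin 7 ⊕ Fin 5) × Fin (2 * n)), A.card = 12 * n ∧
        max (edgesIn (blowup HI7C5 (2 * n)) A) (edgesIn (blowup HI7C5 (2 * n)) Aᶜ)
          = 37 * n ^ 2) ∧
      ((37 * n ^ 2 : ℝ) = 37 / 576 * (24 * n) ^ 2 ∧
        (37 * n ^ 2 : ℝ) > (24 * n : ℝ) ^ 2 / 16) := by
  refine ⟨?_, ?_, ?_, ?_⟩
  · -- lower bound for every balanced bipartition
    intro A hA
    set a : (Fin 7 ⊕ Fin 5) → ℕ := fun u => (A.filter fun p => p.1 = u).card with ha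
    set b : (Fin 7 ⊕ Fin 5) → ℕ := fun u => (Aᶜ.filter fun p => p.1 = u).card with hb
    have hab : ∀ u, a u + b u = 2*n := fun u => card_fiber_compl (2*n) A u
    have h2eA := blowup_count (2*n) A a (fun u => rfl)
    have h2eB := blowup_count (2*n) Aᶜ b (fun u => rfl)
    have hsum : (∑ i : Fin 7, a (.inl i))
        + (a (.inr 0) + a (.inr 1) + a (.inr 2) + a (.inr 3) + a (.inr 4)) = 12*n := by
      have h0 : ∑ u : Fin 7 ⊕ Fin 5, a u = A.card := sum_card_fiber (2*n) A
      rw [hA] at h0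
      rw [Fintype.sum_sum_type, Fin.sum_univ_five (fun j => a (.inr j))] at h0
      omega
    have hss : (∑ i : Fin 7, a (.inl i)) + (∑ i : Fin 7, b (.inl i)) = 14*n := by
      rw [← Finset.sum_add_distrib]
      rw [Finset.sum_congr rfl fun i _ => hab (.inl i), Finset.sum_const]
      simp only [Finset.card_univ, Fintype.card_fin, smul_eq_mul]
      omega
    have harith := arithNat n (∑ i : Fin 7, a (.inl i)) (∑ i : Fin 7, b (.inl i))
      (a (.inr 0)) (a (.inr 1)) (a (.inr 2)) (a (.inr 3)) (a (.inr 4))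
      (b (.inr 0)) (b (.inr 1)) (b (.inr 2)) (b (.inr 3)) (b (.inr 4))
      hss (hab _) (hab _) (hab _) (hab _) (hab _) hsum
    have heA : edgesIn (blowup HI7C5 (2*n)) A
        = (∑ i : Fin 7, a (.inl i)) * (a (.inr 0) + a (.inr 1) + a (.inr 2) + a (.inr 3)
            + a (.inr 4))
          + (a (.inr 0)*a (.inr 1) + a (.inr 1)*a (.inr 2) + a (.inr 2)*a (.inr 3)
            + a (.inr 3)*a (.inr 4) + a (.inr 4)*a (.inr 0)) := by
      refine Nat.eq_of_mul_eq_mul_left (show 0 < 2 by norm_num) ?_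
      rw [h2eA, Fin.sum_univ_five (fun j => a (.inr j))]
      ring
    have heB : edgesIn (blowup HI7C5 (2*n)) Aᶜ
        = (∑ i : Fin 7, b (.inl i)) * (b (.inr 0) + b (.inr 1) + b (.inr 2) + b (.inr 3)
            + b (.inr 4))
          + (b (.inr 0)*b (.inr 1) + b (.inr 1)*b (.inr 2) + b (.inr 2)*b (.inr 3)
            + b (.inr 3)*b (.inr 4) + b (.inr 4)*b (.inr 0)) := by
      refine Nat.eq_of_mul_eq_mul_left (show 0 < 2 by norm_num) ?_
      rw [h2eB, Fin.sum_univ_five (fun j => b (.inr j))]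
      ring
    rw [ge_iff_le, heA, heB]
    exact harith
  · -- the extremal bipartition
    set A : Finset ((Fin 7 ⊕ Fin 5) × Fin (2*n)) := Finset.univ.filter (consP n) with hAdef
    have hnM : n ≤ 2*n := by omega
    have ha0 : (A.filter fun p => p.1 = Sum.inl 0).card = 2*n :=
      fiber_full (consP n) _ (fun k => by simp [consP])
    have ha1 : (A.filter fun p => p.1 = Sum.inl 1).card = 2*n :=
      fiber_full (consP n) _ (fun k => by simp [consP])
    have ha2 : (A.filter fun p => p.1 = Sum.inl 2).card = 2*n :=
      fiber_full (consP n) _ (fun k => by simp [consP])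
    have ha3 : (A.filter fun p => p.1 = Sum.inl 3).card = n :=
      fiber_half (consP n) _ n hnM (fun k => by
        simp [consP, show ((3:Fin 7):ℕ) = 3 from rfl])
    have ha4 : (A.filter fun p => p.1 = Sum.inl 4).card = 0 :=
      fiber_empty (consP n) _ (fun k => by
        simp [consP, show ((4:Fin 7):ℕ) = 4 from rfl])
    have ha5 : (A.filter fun p => p.1 = Sum.inl 5).card = 0 :=
      fiber_empty (consP n) _ (fun k => by
        simp [consP, show ((5:Fin 7):ℕ) = 5 from rfl])
    have ha6 : (A.filter fun p => p.1 = Sum.inl 6).card = 0 :=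
      fiber_empty (consP n) _ (fun k => by
        simp [consP, show ((6:Fin 7):ℕ) = 6 from rfl])
    have hb0 : (A.filter fun p => p.1 = Sum.inr 0).card = 2*n :=
      fiber_full (consP n) _ (fun k => by simp [consP])
    have hb1 : (A.filter fun p => p.1 = Sum.inr 1).card = 0 :=
      fiber_empty (consP n) _ (fun k => by simp [consP])
    have hb2 : (A.filter fun p => p.1 = Sum.inr 2).card = 2*n :=
      fiber_full (consP n) _ (fun k => by simp [consP])
    have hb3 : (A.filter fun p => p.1 = Sum.inr 3).card = 0 :=
      fiber_empty (consP n) _ (fun k => by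
        simp [consP, show ((3:Fin 5):ℕ) = 3 from rfl])
    have hb4 : (A.filter fun p => p.1 = Sum.inr 4).card = n :=
      fiber_half (consP n) _ n hnM (fun k => by
        simp [consP, show ((4:Fin 5):ℕ) = 4 from rfl])
    have hcard : A.card = 12*n := by
      have hsum : ∑ u : Fin 7 ⊕ Fin 5, (A.filter fun p => p.1 = u).card = A.card :=
        sum_card_fiber (2*n) A
      rw [Fintype.sum_sum_type, Fin.sum_univ_seven, Fin.sum_univ_five] at hsum
      rw [ha0, ha1, ha2, ha3, ha4, ha5, ha6, hb0, hb1, hb2, hb3, hb4] at hsum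
      omega
    refine ⟨A, by rw [hcard], ?_⟩
    have h2eA := blowup_count (2*n) A (fun u => (A.filter fun p => p.1 = u).card)
      (fun u => rfl)
    rw [Fin.sum_univ_seven, Fin.sum_univ_five] at h2eA
    simp only [ha0, ha1, ha2, ha3, ha4, ha5, ha6, hb0, hb1, hb2, hb3, hb4] at h2eA
    have heA : edgesIn (blowup HI7C5 (2*n)) A = 37 * n^2 := by
      refine Nat.eq_of_mul_eq_mul_left (show 0 < 2 by norm_num) ?_
      rw [h2eA]; ring
    have hc0 : (Aᶜ.filter fun p => p.1 = Sum.inl 0).card = 0 := by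
      have := card_fiber_compl (2*n) A (Sum.inl 0); omega
    have hc1 : (Aᶜ.filter fun p => p.1 = Sum.inl 1).card = 0 := by
      have := card_fiber_compl (2*n) A (Sum.inl 1); omega
    have hc2 : (Aᶜ.filter fun p => p.1 = Sum.inl 2).card = 0 := by
      have := card_fiber_compl (2*n) A (Sum.inl 2); omega
    have hc3 : (Aᶜ.filter fun p => p.1 = Sum.inl 3).card = n := by
      have := card_fiber_compl (2*n) A (Sum.inl 3); omega
    have hc4 : (Aᶜ.filter fun p => p.1 = Sum.inl 4).card = 2*n := by
      have := card_fiber_compl (2*n) A (Sum.inl 4); omega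
    have hc5 : (Aᶜ.filter fun p => p.1 = Sum.inl 5).card = 2*n := by
      have := card_fiber_compl (2*n) A (Sum.inl 5); omega
    have hc6 : (Aᶜ.filter fun p => p.1 = Sum.inl 6).card = 2*n := by
      have := card_fiber_compl (2*n) A (Sum.inl 6); omega
    have hd0 : (Aᶜ.filter fun p => p.1 = Sum.inr 0).card = 0 := by
      have := card_fiber_compl (2*n) A (Sum.inr 0); omega
    have hd1 : (Aᶜ.filter fun p => p.1 = Sum.inr 1).card = 2*n := by
      have := card_fiber_compl (2*n) A (Sum.inr 1); omega
    have hd2 : (Aᶜ.filter fun p => p.1 = Sum.inr 2).card = 0 := by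
      have := card_fiber_compl (2*n) A (Sum.inr 2); omega
    have hd3 : (Aᶜ.filter fun p => p.1 = Sum.inr 3).card = 2*n := by
      have := card_fiber_compl (2*n) A (Sum.inr 3); omega
    have hd4 : (Aᶜ.filter fun p => p.1 = Sum.inr 4).card = n := by
      have := card_fiber_compl (2*n) A (Sum.inr 4); omega
    have h2eB := blowup_count (2*n) Aᶜ (fun u => (Aᶜ.filter fun p => p.1 = u).card)
      (fun u => rfl)
    rw [Fin.sum_univ_seven, Fin.sum_univ_five] at h2eB
    simp only [hc0, hc1, hc2, hc3, hc4, hc5, hc6, hd0, hd1, hd2, hd3, hd4] at h2eB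
    have heB : edgesIn (blowup HI7C5 (2*n)) Aᶜ = 37 * n^2 := by
      refine Nat.eq_of_mul_eq_mul_left (show 0 < 2 by norm_num) ?_
      rw [h2eB]; ring
    rw [heA, heB, max_self]
  · -- real identity
    push_cast
    ring
  · have hn' : (1:ℝ) ≤ (n:ℝ) := by exact_mod_cast hn
    nlinarith [hn']
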